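/- Let T, m be natural numbers, let B₁, ε > 0 and K ≥ 1, L ≥ 1 be reals, let S : Fin T → Finset (Fin m) with |S(t)| ≤ K for all t, and define counters N(t,i) = |{s < t : i ∈ S(s)}|. Let Δ : Fin T → ℝ be nonnegative and δ : Fin m → ℝ be positive with δ(i) ≤ Δ(t) whenever i ∈ S(t) and Δ(t) > 0. Suppose that for every round t with Δ(t) > 0 we have Δ(t) ≤ B₁·∑_{i∈S(t)} (4·√(L/(N(t,i)+1)) + 24·K·L³/((N(t,i)+1)·ε)). Then ∑_{t=0}^{T−1} Δ(t) ≤ ∑_{i=0}^{m−1} (16·B₁·√(L·(N*(i)+1)) + (48·B₁·K·L³/ε)·(1 + ln(N*(i)+1))), where N*(i) = max(256·B₁²·K²·L/δ(i)², 96·B₁·K²·L³/(ε·δ(i))). -/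

import Mathlib

lemma aux_sum_inv_sqrt (n : ℕ) :
    ∑ k ∈ Finset.range n, (1 / Real.sqrt ((k : ℝ) + 1)) ≤ 2 * Real.sqrt n := by
  induction n with
  | zero => simp
  | succ n ih =>
    rw [Finset.sum_range_succ]
    have h1 : 0 < Real.sqrt ((n : ℝ) + 1) := Real.sqrt_pos.mpr (by positivity)
    have key : 1 / Real.sqrt ((n : ℝ) + 1) ≤ 2 * Real.sqrt ((n : ℝ) + 1) - 2 * Real.sqrt (n : ℝ) := by
      rw [div_le_iff₀ h1]
      have hsq : Real.sqrt (n : ℝ) ^ 2 = (n : ℝ) := Real.sq_sqrt (Nat.cast_nonneg n)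
      have hsq1 : Real.sqrt ((n : ℝ) + 1) ^ 2 = (n : ℝ) + 1 := Real.sq_sqrt (by positivity)
      nlinarith [sq_nonneg (Real.sqrt ((n : ℝ) + 1) - Real.sqrt (n : ℝ)), Real.sqrt_nonneg (n : ℝ)]
    push_cast
    linarith

lemma aux_sum_inv (n : ℕ) :
    ∑ k ∈ Finset.range n, (1 / ((k : ℝ) + 1)) ≤ 1 + Real.log n := by
  induction n with
  | zero => simp
  | succ n ih =>
    rw [Finset.sum_range_succ]
    rcases Nat.eq_zero_or_pos n with h | h
    · subst h; simp
    · have hn : (0 : ℝ) < n := by exact_mod_cast h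
      have hlog : Real.log (n : ℝ) + 1 / ((n : ℝ) + 1) ≤ Real.log ((n : ℝ) + 1) := by
        have h2 := Real.log_le_sub_one_of_pos (x := (n : ℝ) / ((n : ℝ) + 1)) (by positivity)
        rw [Real.log_div (by positivity) (by positivity)] at h2
        have heq : (n : ℝ) / ((n : ℝ) + 1) - 1 = -(1 / ((n : ℝ) + 1)) := by field_simp; ring
        rw [heq] at h2
        linarith
      push_cast
      linarith

lemma aux_wsum (K L ε : ℝ) (hK : 1 ≤ K) (hL : 1 ≤ L) (hε : 0 < ε) (M : ℕ) :
    ∑ n ∈ Finset.range (M + 1),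
        (4 * Real.sqrt (L / ((n : ℝ) + 1)) + 24 * K * L ^ 3 / (((n : ℝ) + 1) * ε))
      ≤ 8 * Real.sqrt (L * ((M : ℝ) + 1)) + (24 * K * L ^ 3 / ε) * (1 + Real.log ((M : ℝ) + 1)) := by
  have hL0 : (0 : ℝ) ≤ L := by linarith
  have hK0 : (0 : ℝ) < K := by linarith
  rw [Finset.sum_add_distrib]
  have h1 : ∑ n ∈ Finset.range (M + 1), (4 * Real.sqrt (L / ((n : ℝ) + 1)))
      ≤ 8 * Real.sqrt (L * ((M : ℝ) + 1)) := by
    have e : ∀ n : ℕ, 4 * Real.sqrt (L / ((n : ℝ) + 1)) = 4 * Real.sqrt L * (1 / Real.sqrt ((n : ℝ) + 1)) := by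
      intro n
      rw [Real.sqrt_div hL0]
      ring
    calc ∑ n ∈ Finset.range (M + 1), (4 * Real.sqrt (L / ((n : ℝ) + 1)))
        = 4 * Real.sqrt L * ∑ n ∈ Finset.range (M + 1), (1 / Real.sqrt ((n : ℝ) + 1)) := by
          rw [Finset.mul_sum]; exact Finset.sum_congr rfl fun n _ => e n
      _ ≤ 4 * Real.sqrt L * (2 * Real.sqrt (M + 1)) := by
          have := aux_sum_inv_sqrt (M + 1)
          push_cast at this
          exact mul_le_mul_of_nonneg_left this (by positivity)
      _ = 8 * Real.sqrt (L * ((M : ℝ) + 1)) := by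
          rw [Real.sqrt_mul hL0]; ring
  have h2 : ∑ n ∈ Finset.range (M + 1), (24 * K * L ^ 3 / (((n : ℝ) + 1) * ε))
      ≤ (24 * K * L ^ 3 / ε) * (1 + Real.log ((M : ℝ) + 1)) := by
    have e : ∀ n : ℕ, 24 * K * L ^ 3 / (((n : ℝ) + 1) * ε) = (24 * K * L ^ 3 / ε) * (1 / ((n : ℝ) + 1)) := by
      intro n; rw [mul_comm ((n:ℝ)+1) ε, ← div_div]; ring
    calc ∑ n ∈ Finset.range (M + 1), (24 * K * L ^ 3 / (((n : ℝ) + 1) * ε))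
        = (24 * K * L ^ 3 / ε) * ∑ n ∈ Finset.range (M + 1), (1 / ((n : ℝ) + 1)) := by
          rw [Finset.mul_sum]; exact Finset.sum_congr rfl fun n _ => e n
      _ ≤ (24 * K * L ^ 3 / ε) * (1 + Real.log ((M : ℝ) + 1)) := by
          have := aux_sum_inv (M + 1)
          push_cast at this
          exact mul_le_mul_of_nonneg_left this (by positivity)
  linarith

lemma aux_large (B₁ ε K L d : ℝ) (hB : 0 < B₁) (hε : 0 < ε) (hK : 1 ≤ K) (hL : 1 ≤ L)
    (hd : 0 < d) (n : ℝ) (hn : 0 ≤ n)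
    (h : max (256 * B₁ ^ 2 * K ^ 2 * L / d ^ 2) (96 * B₁ * K ^ 2 * L ^ 3 / (ε * d)) ≤ n) :
    4 * Real.sqrt (L / (n + 1)) + 24 * K * L ^ 3 / ((n + 1) * ε) ≤ d / (2 * B₁ * K) := by
  have hK0 : (0 : ℝ) < K := by linarith
  have hL0 : (0 : ℝ) < L := by linarith
  have h1 : 256 * B₁ ^ 2 * K ^ 2 * L / d ^ 2 ≤ n := le_trans (le_max_left _ _) h
  have h2 : 96 * B₁ * K ^ 2 * L ^ 3 / (ε * d) ≤ n := le_trans (le_max_right _ _) h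
  have hn1 : (0 : ℝ) < n + 1 := by linarith
  have partA : 4 * Real.sqrt (L / (n + 1)) ≤ d / (4 * B₁ * K) := by
    have hle : L / (n + 1) ≤ (d / (16 * B₁ * K)) ^ 2 := by
      rw [div_le_iff₀ hn1]
      have e : (d / (16 * B₁ * K)) ^ 2 * (256 * B₁ ^ 2 * K ^ 2 * L / d ^ 2 + 1)
          = L + (d / (16 * B₁ * K)) ^ 2 := by
        field_simp
        ring
      calc L ≤ L + (d / (16 * B₁ * K)) ^ 2 := le_add_of_nonneg_right (sq_nonneg _)
        _ = (d / (16 * B₁ * K)) ^ 2 * (256 * B₁ ^ 2 * K ^ 2 * L / d ^ 2 + 1) := e.symm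
        _ ≤ (d / (16 * B₁ * K)) ^ 2 * (n + 1) :=
            mul_le_mul_of_nonneg_left (by linarith) (sq_nonneg _)
    have hs : Real.sqrt (L / (n + 1)) ≤ d / (16 * B₁ * K) := by
      calc Real.sqrt (L / (n + 1)) ≤ Real.sqrt ((d / (16 * B₁ * K)) ^ 2) := Real.sqrt_le_sqrt hle
        _ = d / (16 * B₁ * K) := Real.sqrt_sq (by positivity)
    have e2 : 4 * (d / (16 * B₁ * K)) = d / (4 * B₁ * K) := by ring
    linarith
  have partB : 24 * K * L ^ 3 / ((n + 1) * ε) ≤ d / (4 * B₁ * K) := by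
    rw [div_le_div_iff₀ (by positivity) (by positivity)]
    have h2' : 96 * B₁ * K ^ 2 * L ^ 3 ≤ n * (ε * d) := by
      rw [div_le_iff₀ (by positivity)] at h2
      exact h2
    nlinarith [mul_pos hε hd]
  have e3 : d / (4 * B₁ * K) + d / (4 * B₁ * K) = d / (2 * B₁ * K) := by ring
  linarith

lemma aux_main (T m : ℕ) (B₁ : ℝ) (hB : 0 < B₁)
    (S : Fin T → Finset (Fin m))
    (N : Fin T → Fin m → ℕ)
    (hN : ∀ t i, N t i = (Finset.univ.filter (fun s : Fin T => s < t ∧ i ∈ S s)).card)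
    (Δ : Fin T → ℝ) (hΔ : ∀ t, 0 ≤ Δ t)
    (w : ℕ → ℝ) (hw0 : ∀ n, 0 ≤ w n)
    (g : Fin m → ℝ)
    (hbound : ∀ t, 0 < Δ t →
      Δ t ≤ 2 * B₁ * ∑ i ∈ (S t).filter (fun i => (N t i : ℝ) < g i), w (N t i)) :
    ∑ t : Fin T, Δ t ≤ 2 * B₁ * ∑ i : Fin m, ∑ n ∈ Finset.range (⌊g i⌋₊ + 1), w n := by
  classical
  have step1 : ∑ t : Fin T, Δ t ≤
      2 * B₁ * ∑ t : Fin T, ∑ i ∈ (S t).filter (fun i => (N t i : ℝ) < g i), w (N t i) := by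
    rw [Finset.mul_sum]
    refine Finset.sum_le_sum fun t _ => ?_
    rcases (hΔ t).lt_or_eq with h | h
    · exact hbound t h
    · rw [← h]
      have hnn : (0:ℝ) ≤ ∑ i ∈ (S t).filter (fun i => (N t i : ℝ) < g i), w (N t i) :=
        Finset.sum_nonneg fun i _ => hw0 _
      positivity
  have swap : ∑ t : Fin T, ∑ i ∈ (S t).filter (fun i => (N t i : ℝ) < g i), w (N t i)
      = ∑ i : Fin m, ∑ t ∈ Finset.univ.filter (fun t => i ∈ S t ∧ (N t i : ℝ) < g i), w (N t i) := by
    have h1 : ∀ t : Fin T, (S t).filter (fun i => (N t i : ℝ) < g i)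
        = Finset.univ.filter (fun i => i ∈ S t ∧ (N t i : ℝ) < g i) := by
      intro t; ext i; simp [Finset.mem_filter]
    simp only [h1, Finset.sum_filter]
    exact Finset.sum_comm
  have mono : ∀ (i : Fin m) {s t : Fin T}, s < t → i ∈ S s → N s i < N t i := by
    intro i s t hst hmem
    rw [hN, hN]
    apply Finset.card_lt_card
    have hsub : Finset.univ.filter (fun s' : Fin T => s' < s ∧ i ∈ S s')
        ⊆ Finset.univ.filter (fun s' : Fin T => s' < t ∧ i ∈ S s') := by
      intro x hx
      simp only [Finset.mem_filter] at *
      exact ⟨hx.1, hx.2.1.trans hst, hx.2.2⟩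
    refine (Finset.ssubset_iff_of_subset hsub).mpr ⟨s, ?_, ?_⟩
    · simp [hst, hmem]
    · simp
  have step2 : ∀ i : Fin m,
      ∑ t ∈ Finset.univ.filter (fun t => i ∈ S t ∧ (N t i : ℝ) < g i), w (N t i)
        ≤ ∑ n ∈ Finset.range (⌊g i⌋₊ + 1), w n := by
    intro i
    set F := Finset.univ.filter (fun t => i ∈ S t ∧ (N t i : ℝ) < g i) with hF
    have hinj : ∀ a ∈ F, ∀ b ∈ F, N a i = N b i → a = b := by
      intro a ha b hb hab
      by_contra hne
      rcases lt_or_gt_of_ne hne with h | h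
      · exact absurd hab (Nat.ne_of_lt (mono i h (Finset.mem_filter.mp ha).2.1))
      · exact absurd hab.symm (Nat.ne_of_lt (mono i h (Finset.mem_filter.mp hb).2.1))
    calc ∑ t ∈ F, w (N t i) = ∑ n ∈ F.image (fun t => N t i), w n :=
          (Finset.sum_image hinj).symm
      _ ≤ ∑ n ∈ Finset.range (⌊g i⌋₊ + 1), w n := by
          refine Finset.sum_le_sum_of_subset_of_nonneg ?_ fun n _ _ => hw0 n
          intro n hn
          rw [Finset.mem_image] at hn
          obtain ⟨t, ht, rfl⟩ := hn
          have hlt : (N t i : ℝ) < g i := (Finset.mem_filter.mp ht).2.2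
          rw [Finset.mem_range]
          exact Nat.lt_succ_of_le (Nat.le_floor hlt.le)
  calc ∑ t : Fin T, Δ t ≤ _ := step1
    _ = 2 * B₁ * ∑ i : Fin m, ∑ t ∈ Finset.univ.filter (fun t => i ∈ S t ∧ (N t i : ℝ) < g i), w (N t i) := by
        rw [swap]
    _ ≤ 2 * B₁ * ∑ i : Fin m, ∑ n ∈ Finset.range (⌊g i⌋₊ + 1), w n :=
        mul_le_mul_of_nonneg_left (Finset.sum_le_sum fun i _ => step2 i) (by linarith)

/-- Deterministic core of the regret upper bound for the ε-differentially private CUCB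
algorithm under `B₁`-bounded smoothness: if in every round `t` with positive gap `Δ t`
the gap is bounded by the sum of confidence widths of the played base arms (evaluated at
the current pull counts `N t i`), then the cumulative gap is bounded by a per-arm sum of
confidence widths up to the exploration thresholds
`N*(i) = max (256 B₁² K² L / δ(i)²) (96 B₁ K² L³ / (ε δ(i)))`. -/
theorem stmt13 (T m : ℕ) (B₁ ε K L : ℝ)
    (hB : 0 < B₁) (hε : 0 < ε) (hK : 1 ≤ K) (hL : 1 ≤ L)
    (S : Fin T → Finset (Fin m)) (hcard : ∀ t, ((S t).card : ℝ) ≤ K)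
    (N : Fin T → Fin m → ℕ)
    (hN : ∀ t i, N t i = (Finset.univ.filter (fun s : Fin T => s < t ∧ i ∈ S s)).card)
    (Δ : Fin T → ℝ) (hΔ : ∀ t, 0 ≤ Δ t)
    (δ : Fin m → ℝ) (hδ : ∀ i, 0 < δ i)
    (hδΔ : ∀ t, ∀ i ∈ S t, 0 < Δ t → δ i ≤ Δ t)
    (hbound : ∀ t, 0 < Δ t →
      Δ t ≤ B₁ * ∑ i ∈ S t,
        (4 * Real.sqrt (L / ((N t i : ℝ) + 1)) + 24 * K * L ^ 3 / (((N t i : ℝ) + 1) * ε))) :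
    ∑ t : Fin T, Δ t ≤ ∑ i : Fin m,
      (16 * B₁ * Real.sqrt (L *
          (max (256 * B₁ ^ 2 * K ^ 2 * L / (δ i) ^ 2) (96 * B₁ * K ^ 2 * L ^ 3 / (ε * δ i)) + 1)) +
        (48 * B₁ * K * L ^ 3 / ε) *
          (1 + Real.log
            (max (256 * B₁ ^ 2 * K ^ 2 * L / (δ i) ^ 2) (96 * B₁ * K ^ 2 * L ^ 3 / (ε * δ i)) + 1))) := by
  classical
  have hK0 : (0 : ℝ) < K := by linarith
  have hL0 : (0 : ℝ) < L := by linarith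
  set w : ℕ → ℝ := fun n => 4 * Real.sqrt (L / ((n : ℝ) + 1)) + 24 * K * L ^ 3 / (((n : ℝ) + 1) * ε)
    with hwdef
  set g : Fin m → ℝ := fun i =>
      max (256 * B₁ ^ 2 * K ^ 2 * L / (δ i) ^ 2) (96 * B₁ * K ^ 2 * L ^ 3 / (ε * δ i)) with hgdef
  have hw0 : ∀ n : ℕ, 0 ≤ w n := by
    intro n
    simp only [hwdef]
    positivity
  have hg0 : ∀ i, 0 ≤ g i := by
    intro i
    simp only [hgdef]
    have h0 : (0:ℝ) ≤ 256 * B₁ ^ 2 * K ^ 2 * L / (δ i) ^ 2 := by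
      have := hδ i
      positivity
    exact le_trans h0 (le_max_left _ _)
  have hbound' : ∀ t, 0 < Δ t →
      Δ t ≤ 2 * B₁ * ∑ i ∈ (S t).filter (fun i => (N t i : ℝ) < g i), w (N t i) := by
    intro t ht
    have hb : Δ t ≤ B₁ * ∑ i ∈ S t, w (N t i) := by
      simp only [hwdef]
      exact hbound t ht
    have hsplit : ∑ i ∈ S t, w (N t i)
        = ∑ i ∈ (S t).filter (fun i => (N t i : ℝ) < g i), w (N t i)
          + ∑ i ∈ (S t).filter (fun i => ¬ ((N t i : ℝ) < g i)), w (N t i) :=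
      (Finset.sum_filter_add_sum_filter_not _ _ _).symm
    have hlarge : ∑ i ∈ (S t).filter (fun i => ¬ ((N t i : ℝ) < g i)), w (N t i)
        ≤ Δ t / (2 * B₁) := by
      have hle : ∀ i ∈ (S t).filter (fun i => ¬ ((N t i : ℝ) < g i)),
          w (N t i) ≤ Δ t / (2 * B₁ * K) := by
        intro i hi
        obtain ⟨hiS, hnot⟩ := Finset.mem_filter.mp hi
        have hgle : g i ≤ (N t i : ℝ) := le_of_not_gt hnot
        simp only [hgdef] at hgle
        have hal := aux_large B₁ ε K L (δ i) hB hε hK hL (hδ i) (N t i) (Nat.cast_nonneg _) hgle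
        have hδt := hδΔ t i hiS ht
        have hw' : w (N t i) ≤ δ i / (2 * B₁ * K) := by
          simp only [hwdef]
          exact hal
        calc w (N t i) ≤ δ i / (2 * B₁ * K) := hw'
          _ ≤ Δ t / (2 * B₁ * K) := by gcongr
      calc ∑ i ∈ (S t).filter (fun i => ¬ ((N t i : ℝ) < g i)), w (N t i)
          ≤ ((S t).filter (fun i => ¬ ((N t i : ℝ) < g i))).card • (Δ t / (2 * B₁ * K)) :=
            Finset.sum_le_card_nsmul _ _ _ hle
        _ = (((S t).filter (fun i => ¬ ((N t i : ℝ) < g i))).card : ℝ) * (Δ t / (2 * B₁ * K)) := by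
            rw [nsmul_eq_mul]
        _ ≤ K * (Δ t / (2 * B₁ * K)) := by
            refine mul_le_mul_of_nonneg_right ?_ (by positivity)
            exact le_trans (by exact_mod_cast Nat.cast_le.mpr (Finset.card_filter_le _ _)) (hcard t)
        _ = Δ t / (2 * B₁) := by
            field_simp
    have hmulB : B₁ * (∑ i ∈ (S t).filter (fun i => ¬ ((N t i : ℝ) < g i)), w (N t i))
        ≤ B₁ * (Δ t / (2 * B₁)) := mul_le_mul_of_nonneg_left hlarge hB.le
    have heq : B₁ * (Δ t / (2 * B₁)) = Δ t / 2 := by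
      field_simp
    have hexp : B₁ * ∑ i ∈ S t, w (N t i)
        = B₁ * ∑ i ∈ (S t).filter (fun i => (N t i : ℝ) < g i), w (N t i)
          + B₁ * ∑ i ∈ (S t).filter (fun i => ¬ ((N t i : ℝ) < g i)), w (N t i) := by
      rw [hsplit]; ring
    rw [hexp] at hb
    linarith
  have hmain := aux_main T m B₁ hB S N hN Δ hΔ w hw0 g hbound'
  have hper : ∀ i : Fin m,
      2 * B₁ * ∑ n ∈ Finset.range (⌊g i⌋₊ + 1), w n
        ≤ 16 * B₁ * Real.sqrt (L * (g i + 1))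
          + (48 * B₁ * K * L ^ 3 / ε) * (1 + Real.log (g i + 1)) := by
    intro i
    have hMle : ((⌊g i⌋₊ : ℝ)) ≤ g i := Nat.floor_le (hg0 i)
    have hws : ∑ n ∈ Finset.range (⌊g i⌋₊ + 1), w n
        ≤ 8 * Real.sqrt (L * ((⌊g i⌋₊ : ℝ) + 1))
          + (24 * K * L ^ 3 / ε) * (1 + Real.log ((⌊g i⌋₊ : ℝ) + 1)) := by
      simp only [hwdef]
      exact aux_wsum K L ε hK hL hε (⌊g i⌋₊)
    have hA : Real.sqrt (L * ((⌊g i⌋₊ : ℝ) + 1)) ≤ Real.sqrt (L * (g i + 1)) := by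
      gcongr
    have hB' : Real.log ((⌊g i⌋₊ : ℝ) + 1) ≤ Real.log (g i + 1) := by
      have hp : (0:ℝ) < (⌊g i⌋₊ : ℝ) + 1 := by positivity
      gcongr

    calc 2 * B₁ * ∑ n ∈ Finset.range (⌊g i⌋₊ + 1), w n
        ≤ 2 * B₁ * (8 * Real.sqrt (L * ((⌊g i⌋₊ : ℝ) + 1))
            + (24 * K * L ^ 3 / ε) * (1 + Real.log ((⌊g i⌋₊ : ℝ) + 1))) :=
          mul_le_mul_of_nonneg_left hws (by positivity)
      _ = 16 * B₁ * Real.sqrt (L * ((⌊g i⌋₊ : ℝ) + 1))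
            + (48 * B₁ * K * L ^ 3 / ε) * (1 + Real.log ((⌊g i⌋₊ : ℝ) + 1)) := by
          ring
      _ ≤ 16 * B₁ * Real.sqrt (L * (g i + 1))
            + (48 * B₁ * K * L ^ 3 / ε) * (1 + Real.log (g i + 1)) := by
          refine add_le_add (mul_le_mul_of_nonneg_left hA (by positivity)) ?_
          exact mul_le_mul_of_nonneg_left (by linarith) (by positivity)
  have hfin : ∑ t : Fin T, Δ t ≤ ∑ i : Fin m,
      (16 * B₁ * Real.sqrt (L * (g i + 1))
        + (48 * B₁ * K * L ^ 3 / ε) * (1 + Real.log (g i + 1))) := by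
    calc ∑ t : Fin T, Δ t ≤ 2 * B₁ * ∑ i : Fin m, ∑ n ∈ Finset.range (⌊g i⌋₊ + 1), w n := hmain
      _ = ∑ i : Fin m, 2 * B₁ * ∑ n ∈ Finset.range (⌊g i⌋₊ + 1), w n := Finset.mul_sum _ _ _
      _ ≤ _ := Finset.sum_le_sum fun i _ => hper i
  simpa only [hgdef] using hfin
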